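/- Let 𝒢⟨N] be a top in the Grassmannian 𝒢, i.e. N is a subspace of V such that there exists X ∈ 𝒢 with X ≤ N and dim(N/X) = 1. Then: (1) 𝒢⟨N] ⊆ 𝒢; (2) any two distinct elements E, E' of 𝒢⟨N] are adjacent; (3) two adjacent elements E, E' ∈ 𝒢 belong to 𝒢⟨N] if, and only if, E + E' = N. -/

import Mathlib

/-- The Grassmannian `𝒢` of all subspaces `X ≤ V` with `X ≅ V/X`. -/
def Grass (K V : Type*) [DivisionRing K] [AddCommGroup V] [Module K V] :
    Set (Submodule K V) :=
  {X | Nonempty (X ≃ₗ[K] (V ⧸ X))}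

variable {K V : Type*} [DivisionRing K] [AddCommGroup V] [Module K V]

/-- The dimension of the quotient `E / M` (computed as the rank of `E ⧸ (M ∩ E)`). -/
noncomputable def quotRank (M E : Submodule K V) : Cardinal :=
  Module.rank K (E ⧸ (M.comap E.subtype))

/-- Two subspaces are adjacent if `dim (X/(X ⊓ Y)) = dim (Y/(X ⊓ Y)) = 1`. -/
def Adjacent (X Y : Submodule K V) : Prop :=
  quotRank (X ⊓ Y) X = 1 ∧ quotRank (X ⊓ Y) Y = 1

/-- Two subspaces are distant if they are complementary: `X ⊕ Y = V`. -/
def Distant (X Y : Submodule K V) : Prop := IsCompl X Y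

/-- The star `𝒢[M⟩` with centre `M`. -/
def starSet (M : Submodule K V) : Set (Submodule K V) :=
  {E | M ≤ E ∧ quotRank M E = 1}

/-- `M` is the centre of a star, i.e. there is `X ∈ 𝒢` with `M ≤ X`, `dim (X/M) = 1`. -/
def IsStarCentre (M : Submodule K V) : Prop :=
  ∃ X ∈ Grass K V, M ≤ X ∧ quotRank M X = 1

/-- The top `𝒢⟨N]` with carrier `N`. -/
def topSet (N : Submodule K V) : Set (Submodule K V) :=
  {E | E ≤ N ∧ quotRank E N = 1}

/-- `N` is the carrier of a top, i.e. there is `X ∈ 𝒢` with `X ≤ N`, `dim (N/X) = 1`. -/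
def IsTopCarrier (N : Submodule K V) : Prop :=
  ∃ X ∈ Grass K V, X ≤ N ∧ quotRank X N = 1

/-- An adjacency clique: a set of mutually adjacent elements of `𝒢`. -/
def IsAdjClique (A : Set (Submodule K V)) : Prop :=
  A ⊆ Grass K V ∧ A.Pairwise Adjacent

/-- A maximal adjacency clique. -/
def IsMaxAdjClique (A : Set (Submodule K V)) : Prop :=
  IsAdjClique A ∧ ∀ B, IsAdjClique B → A ⊆ B → A = B

/-- The pencil `𝒢[M,N] = {X ∈ 𝒢 | M < X < N}`. -/
def pencilSet (M N : Submodule K V) : Set (Submodule K V) :=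
  {X ∈ Grass K V | M < X ∧ X < N}

/-- `(M, N)` defines a pencil: there is `X ∈ 𝒢` with `M ≤ X ≤ N` and
`dim (X/M) = dim (N/X) = 1`. -/
def IsPencilPair (M N : Submodule K V) : Prop :=
  ∃ X ∈ Grass K V, M ≤ X ∧ X ≤ N ∧ quotRank M X = 1 ∧ quotRank X N = 1

/-- A pencil in `𝒢`. -/
def IsPencil (S : Set (Submodule K V)) : Prop :=
  ∃ M N : Submodule K V, IsPencilPair M N ∧ S = pencilSet M N

/-- A point is a one-dimensional subspace. -/
def IsPoint (p : Submodule K V) : Prop := Module.rank K p = 1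

/-- A line is a two-dimensional subspace. -/
def IsLine (L : Submodule K V) : Prop := Module.rank K L = 2

/-- Two subspaces meet if they have a common point, i.e. nonzero intersection. -/
def Meets (X Y : Submodule K V) : Prop := X ⊓ Y ≠ ⊥

/-- A distant clique: a set of mutually distant elements of `𝒢`. -/
def IsDistantClique (R : Set (Submodule K V)) : Prop :=
  R ⊆ Grass K V ∧ R.Pairwise Distant

/-- A set has at least three elements. -/
def HasThree (R : Set (Submodule K V)) : Prop :=
  ∃ A ∈ R, ∃ B ∈ R, ∃ C ∈ R, A ≠ B ∧ A ≠ C ∧ B ≠ C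

/-- Condition (R2): if a line meets three mutually distinct elements of `R`
then it meets all elements of `R`. -/
def MeetsThreeMeetsAll (R : Set (Submodule K V)) : Prop :=
  ∀ L : Submodule K V, IsLine L →
    ∀ E₀ ∈ R, ∀ E₁ ∈ R, ∀ E₂ ∈ R, E₀ ≠ E₁ → E₀ ≠ E₂ → E₁ ≠ E₂ →
      Meets L E₀ → Meets L E₁ → Meets L E₂ → ∀ E ∈ R, Meets L E

/-- A partial `Z`-regulus: conditions (R1) and (R2). -/
def IsPartialZRegulus (R : Set (Submodule K V)) : Prop :=
  (IsDistantClique R ∧ HasThree R) ∧ MeetsThreeMeetsAll R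

/-- A `Z`-regulus: a partial `Z`-regulus that is maximal, i.e. not properly
contained in any partial `Z`-regulus. -/
def IsZRegulus (R : Set (Submodule K V)) : Prop :=
  IsPartialZRegulus R ∧ ∀ S : Set (Submodule K V), IsPartialZRegulus S → R ⊆ S → R = S

/-- A directrix of `R`: a line meeting all elements of `R`. -/
def IsDirectrix (R : Set (Submodule K V)) (L : Submodule K V) : Prop :=
  IsLine L ∧ ∀ E ∈ R, Meets L E

/-- Condition (⊠2) from Theorem `Zreg`. -/
def BoxTwo (R : Set (Submodule K V)) : Prop :=
  ∀ E₀ ∈ R, ∀ E₁ ∈ R, ∀ E₂ ∈ R, E₀ ≠ E₁ → E₀ ≠ E₂ → E₁ ≠ E₂ →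
    ∀ W ∈ Grass K V, Adjacent W E₀ → ¬ Distant W E₁ → ¬ Distant W E₂ →
      ∀ E ∈ R, ¬ Distant W E

section Helpers

variable {K V : Type*} [DivisionRing K] [AddCommGroup V] [Module K V]

lemma quotRank_inf_left (p q : Submodule K V) :
    quotRank (p ⊓ q) p = quotRank q (p ⊔ q) :=
  (LinearMap.quotientInfEquivSupQuotient p q).rank_eq

lemma quotRank_self (N : Submodule K V) : quotRank N N = 0 := by
  have : Subsingleton (N ⧸ Submodule.comap N.subtype N) :=
    Submodule.Quotient.subsingleton_iff.mpr (Submodule.comap_subtype_self N)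
  exact rank_subsingleton' K _

lemma rank_eq_quotRank_add {E N : Submodule K V} (h : E ≤ N) :
    Module.rank K N = quotRank E N + Module.rank K E := by
  rw [← Submodule.rank_quotient_add_rank (Submodule.comap N.subtype E)]
  congr 1
  exact (Submodule.comapSubtypeEquivOfLe h).rank_eq

/-- If `E` has corank one in `N` and `E ≤ F ≤ N`, `E ≠ F`, then `F = N`. -/
lemma quotRank_covby {E F N : Submodule K V} (h1 : quotRank E N = 1)
    (hEF : E ≤ F) (hFN : F ≤ N) (hne : E ≠ F) : F = N := by
  set E' := Submodule.comap N.subtype E with hE'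
  set F' := Submodule.comap N.subtype F with hF'
  have hE'F' : E' ≤ F' := Submodule.comap_mono hEF
  have hne' : ¬ F' ≤ E' := by
    intro hle
    apply hne
    have h2 : F ⊓ N = F := inf_eq_left.mpr hFN
    have h3 : E ⊓ N = E := inf_eq_left.mpr (hEF.trans hFN)
    have := Submodule.map_mono (f := N.subtype) hle
    rw [hF', hE', Submodule.map_comap_subtype, Submodule.map_comap_subtype,
      inf_comm, h2, inf_comm, h3] at this
    exact le_antisymm hEF this
  set S := Submodule.map E'.mkQ F' with hS
  have hSbot : S ≠ ⊥ := by
    obtain ⟨x, hxF, hxE⟩ := SetLike.not_le_iff_exists.mp hne'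
    intro hb
    have hxS : E'.mkQ x ∈ S := Submodule.mem_map_of_mem hxF
    rw [hb, Submodule.mem_bot] at hxS
    exact hxE ((Submodule.Quotient.mk_eq_zero E').mp hxS)
  have hrank : Module.rank K ((N ⧸ E') ⧸ S) + Module.rank K S = 1 := by
    rw [Submodule.rank_quotient_add_rank S]
    exact h1
  have hS1 : 1 ≤ Module.rank K S := by
    rw [Cardinal.one_le_iff_ne_zero]
    intro h0
    exact hSbot (Submodule.subsingleton_iff_eq_bot.mp (rank_zero_iff.mp h0))
  have hq0 : Module.rank K ((N ⧸ E') ⧸ S) = 0 := by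
    by_contra h0
    have h1' : 1 ≤ Module.rank K ((N ⧸ E') ⧸ S) := Cardinal.one_le_iff_ne_zero.mpr h0
    have h2 := add_le_add h1' hS1
    rw [hrank] at h2
    norm_num at h2
  have hStop : S = ⊤ := Submodule.Quotient.subsingleton_iff.mp (rank_zero_iff.mp hq0)
  have hF'top : F' = ⊤ := by
    have := (Submodule.map_mkQ_eq_top E' F').mp hStop
    rwa [sup_eq_right.mpr hE'F'] at this
  exact le_antisymm hFN (Submodule.comap_subtype_eq_top.mp hF'top)

lemma rank_quot_eq {E N : Submodule K V} (hEN : E ≤ N) :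
    Module.rank K (V ⧸ E) = Module.rank K (V ⧸ N) + quotRank E N := by
  have e1 : (N ⧸ Submodule.comap N.subtype E) ≃ₗ[K] Submodule.map E.mkQ N := by
    refine (Submodule.quotEquivOfEq _ _ ?_).trans
      ((LinearMap.quotKerEquivRange (E.mkQ.comp N.subtype)).trans (LinearEquiv.ofEq _ _ ?_))
    · rw [LinearMap.ker_comp, Submodule.ker_mkQ]
    · rw [LinearMap.range_comp, Submodule.range_subtype]
  have h := Submodule.rank_quotient_add_rank (Submodule.map E.mkQ N)
  rw [(Submodule.quotientQuotientEquivQuotient E N hEN).rank_eq] at h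
  rw [← h]
  congr 1
  exact e1.symm.rank_eq

lemma sup_eq_of_codim_one {A B N : Submodule K V} (hA : A ≤ N) (hB : B ≤ N)
    (hA1 : quotRank A N = 1) (hB1 : quotRank B N = 1) (hne : A ≠ B) : A ⊔ B = N := by
  have hBA : ¬ B ≤ A := by
    intro h
    have hAN : A = N := quotRank_covby hB1 h hA (fun e => hne e.symm)
    rw [hAN, quotRank_self] at hA1
    exact one_ne_zero hA1.symm
  refine quotRank_covby hA1 le_sup_left (sup_le hA hB) ?_
  intro h
  exact hBA (h ▸ le_sup_right)

lemma mem_grass_of_top {X N : Submodule K V} (hX : X ∈ Grass K V) (hXN : X ≤ N)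
    (hX1 : quotRank X N = 1) {E : Submodule K V} (hE : E ≤ N) (hE1 : quotRank E N = 1) :
    E ∈ Grass K V := by
  rcases eq_or_ne E X with rfl | hne
  · exact hX
  have hXrk : Module.rank K X = Module.rank K (V ⧸ X) :=
    LinearEquiv.nonempty_equiv_iff_rank_eq.mp hX
  have hsupEX : E ⊔ X = N := sup_eq_of_codim_one hE hXN hE1 hX1 hne
  have hsupXE : X ⊔ E = N := by rwa [sup_comm] at hsupEX
  have hq1 : quotRank (E ⊓ X) E = 1 := by
    rw [quotRank_inf_left, hsupEX]; exact hX1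
  have hq2 : quotRank (E ⊓ X) X = 1 := by
    rw [inf_comm, quotRank_inf_left, hsupXE]; exact hE1
  have hrEX : Module.rank K E = Module.rank K X := by
    rw [rank_eq_quotRank_add (inf_le_left : E ⊓ X ≤ E), hq1,
      rank_eq_quotRank_add (inf_le_right : E ⊓ X ≤ X), hq2]
  have hrQ : Module.rank K (V ⧸ E) = Module.rank K (V ⧸ X) := by
    rw [rank_quot_eq hE, hE1, rank_quot_eq hXN, hX1]
  exact LinearEquiv.nonempty_equiv_iff_rank_eq.mpr (by rw [hrEX, hXrk, hrQ])

end Helpers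

/-- Lemma 2.2. Properties of a top `𝒢⟨N]`: it is contained in `𝒢`,
any two of its distinct elements are adjacent, and two adjacent elements of `𝒢`
belong to it iff their join equals `N`. -/
theorem top_properties (hV : 2 < Module.rank K V) (hG : (Grass K V).Nonempty)
    (N : Submodule K V) (hN : IsTopCarrier N) :
    topSet N ⊆ Grass K V ∧
    (∀ E ∈ topSet N, ∀ E' ∈ topSet N, E ≠ E' → Adjacent E E') ∧
    (∀ E ∈ Grass K V, ∀ E' ∈ Grass K V, Adjacent E E' →
      ((E ∈ topSet N ∧ E' ∈ topSet N) ↔ E ⊔ E' = N)) := by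
  obtain ⟨X, hXG, hXN, hX1⟩ := hN
  refine ⟨fun E hE => mem_grass_of_top hXG hXN hX1 hE.1 hE.2, ?_, ?_⟩
  · intro E hE E' hE' hne
    have hsup : E ⊔ E' = N := sup_eq_of_codim_one hE.1 hE'.1 hE.2 hE'.2 hne
    have hsup' : E' ⊔ E = N := by rwa [sup_comm] at hsup
    constructor
    · rw [quotRank_inf_left, hsup]; exact hE'.2
    · rw [inf_comm, quotRank_inf_left, hsup']; exact hE.2
  · intro E _ E' _ hadj
    constructor
    · rintro ⟨hE, hE'⟩
      have hne : E ≠ E' := by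
        rintro rfl
        have := hadj.1
        rw [inf_idem, quotRank_self] at this
        exact one_ne_zero this.symm
      exact sup_eq_of_codim_one hE.1 hE'.1 hE.2 hE'.2 hne
    · intro hsup
      have hsup' : E' ⊔ E = N := by rwa [sup_comm] at hsup
      constructor
      · refine ⟨le_sup_left.trans_eq hsup, ?_⟩
        rw [← hsup', ← quotRank_inf_left, inf_comm]
        exact hadj.2
      · refine ⟨le_sup_right.trans_eq hsup, ?_⟩
        rw [← hsup, ← quotRank_inf_left]
        exact hadj.1
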